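/- arXiv:2202.00771 — 2 statements merged into one kernel-verified Lean document; each statement's English description precedes it below -/
import Mathlib

section
/- Let C_p be the (N-p)×N full row-rank synchronization matrix and A a symmetric positive semi-definite N×N real matrix. Then A maps Ker(C_p) into Ker(C_p) if and only if there exists a symmetric positive semi-definite (N-p)×(N-p) matrix Ā_p such that (C_p C_pᵀ)^{-1/2} C_p A = Ā_p (C_p C_pᵀ)^{-1/2} C_p. -/
open Matrix

open scoped ComplexOrder in
/-- The square root of a positive semidefinite matrix, as `Matrix.PosSemidef.sqrt` was defined
in the older Mathlib (removed since). -/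
noncomputable def Matrix.PosSemidef.sqrt {n 𝕜 : Type*} [Fintype n] [DecidableEq n] [RCLike 𝕜]
    {A : Matrix n n 𝕜} (hA : A.PosSemidef) : Matrix n n 𝕜 :=
  hA.1.eigenvectorUnitary.1 * diagonal ((↑) ∘ (√·) ∘ hA.1.eigenvalues) *
    (star hA.1.eigenvectorUnitary : Matrix n n 𝕜)

open scoped ComplexOrder in
lemma psd_sqrt_mul_self' {n 𝕜 : Type*} [Fintype n] [DecidableEq n] [RCLike 𝕜]
    {A : Matrix n n 𝕜} (hA : A.PosSemidef) : hA.sqrt * hA.sqrt = A := by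
  unfold Matrix.PosSemidef.sqrt
  conv_rhs => rw [hA.1.spectral_theorem, Unitary.conjStarAlgAut_apply]
  have hU : (star hA.1.eigenvectorUnitary : Matrix n n 𝕜) * hA.1.eigenvectorUnitary.1 = 1 :=
    Unitary.coe_star_mul_self _
  calc _ = hA.1.eigenvectorUnitary.1 * diagonal ((↑) ∘ (√·) ∘ hA.1.eigenvalues) *
        ((star hA.1.eigenvectorUnitary : Matrix n n 𝕜) * hA.1.eigenvectorUnitary.1) *
        diagonal ((↑) ∘ (√·) ∘ hA.1.eigenvalues) * (star hA.1.eigenvectorUnitary : Matrix n n 𝕜) := by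
          simp only [Matrix.mul_assoc]
    _ = _ := by
      rw [hU, Matrix.mul_one, Matrix.mul_assoc _ (diagonal _) (diagonal _), diagonal_mul_diagonal]
      congr 3
      funext i
      simp only [Function.comp_apply]
      rw [← RCLike.ofReal_mul, Real.mul_self_sqrt (hA.eigenvalues_nonneg i)]

open scoped ComplexOrder in
lemma psd_sqrt_isHermitian' {n 𝕜 : Type*} [Fintype n] [DecidableEq n] [RCLike 𝕜]
    {A : Matrix n n 𝕜} (hA : A.PosSemidef) : hA.sqrt.IsHermitian := by
  unfold Matrix.PosSemidef.sqrt Matrix.IsHermitian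
  rw [conjTranspose_mul, conjTranspose_mul, diagonal_conjTranspose, ← Matrix.star_eq_conjTranspose,
    ← Matrix.star_eq_conjTranspose, star_star, Matrix.mul_assoc]
  congr 2
  funext i j
  simp [diagonal_apply]

private lemma eq_of_mulVec_eq' {m n : Type*} [Fintype n] [DecidableEq n]
    (M N : Matrix m n ℝ) (h : ∀ x : n → ℝ, M *ᵥ x = N *ᵥ x) : M = N := by
  ext i j
  have := congrFun (h (Pi.single j 1)) i
  simpa [Matrix.mulVec_single_one] using this

theorem stmt2 (N p : ℕ) (hp : p < N)
    (C : Matrix (Fin (N - p)) (Fin N) ℝ) (hC : C.rank = N - p)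
    (hCC : (C * Cᵀ).PosSemidef)
    (A : Matrix (Fin N) (Fin N) ℝ) (hA : A.PosSemidef) :
    (∀ x : Fin N → ℝ, C.mulVec x = 0 → C.mulVec (A.mulVec x) = 0) ↔
      ∃ Abar : Matrix (Fin (N - p)) (Fin (N - p)) ℝ, Abar.PosSemidef ∧
        hCC.sqrt⁻¹ * C * A = Abar * (hCC.sqrt⁻¹ * C) := by
  set S := hCC.sqrt with hSdef
  have hS2 : S * S = C * Cᵀ := psd_sqrt_mul_self' hCC
  -- kernel of Cᵀ is trivial (rank C = N - p)
  have hkerCT : LinearMap.ker Cᵀ.mulVecLin = ⊥ := by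
    have hrank : Cᵀ.rank = N - p := by rw [Matrix.rank_transpose]; exact hC
    have hrn := Cᵀ.mulVecLin.finrank_range_add_finrank_ker
    rw [show Module.finrank ℝ (Fin (N - p) → ℝ) = N - p by simp, ← Matrix.rank, hrank] at hrn
    have : Module.finrank ℝ (LinearMap.ker Cᵀ.mulVecLin) = 0 := by omega
    exact Submodule.finrank_eq_zero.mp this
  -- C * Cᵀ is invertible
  have hUnitCC : IsUnit (C * Cᵀ) := by
    rw [← Matrix.mulVec_injective_iff_isUnit]
    have hker : LinearMap.ker (C * Cᵀ).mulVecLin = ⊥ := by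
      have := Matrix.ker_mulVecLin_transpose_mul_self Cᵀ
      rw [Matrix.transpose_transpose] at this
      rw [this]; exact hkerCT
    intro x y hxy
    have h0 : (C * Cᵀ) *ᵥ (x - y) = 0 := by
      rw [Matrix.mulVec_sub, hxy, sub_self]
    exact sub_eq_zero.mp (Matrix.ker_mulVecLin_eq_bot_iff.mp hker _ h0)
  have hUnitCCdet : IsUnit (C * Cᵀ).det := (Matrix.isUnit_iff_isUnit_det _).mp hUnitCC
  have hSdet : IsUnit S.det := by
    have : S.det * S.det = (C * Cᵀ).det := by rw [← Matrix.det_mul, hS2]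
    exact isUnit_of_mul_isUnit_left (this ▸ hUnitCCdet)
  have hSinv : S⁻¹ * S = 1 := Matrix.nonsing_inv_mul _ hSdet
  have hSinv' : S * S⁻¹ = 1 := Matrix.mul_nonsing_inv _ hSdet
  have hSsymm : Sᵀ = S := by
    have h := (psd_sqrt_isHermitian' hCC).eq
    rwa [Matrix.conjTranspose_eq_transpose_of_trivial] at h
  have hSinvsymm : (S⁻¹)ᵀ = S⁻¹ := by rw [Matrix.transpose_nonsing_inv, hSsymm]
  set D := S⁻¹ * C with hDdef
  have hDDT : D * Dᵀ = 1 := by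
    rw [hDdef, Matrix.transpose_mul, hSinvsymm, ← Matrix.mul_assoc, Matrix.mul_assoc (S⁻¹) C Cᵀ,
      ← hS2, ← Matrix.mul_assoc, hSinv, Matrix.one_mul, hSinv']

  -- C *ᵥ x = 0 ↔ D *ᵥ x = 0
  have hkerDC : ∀ x : Fin N → ℝ, D *ᵥ x = 0 ↔ C *ᵥ x = 0 := by
    intro x
    constructor
    · intro h
      have : S *ᵥ (D *ᵥ x) = 0 := by rw [h, Matrix.mulVec_zero]
      rwa [Matrix.mulVec_mulVec, ← Matrix.mul_assoc, hSinv', Matrix.one_mul] at this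
    · intro h
      rw [hDdef, ← Matrix.mulVec_mulVec, h, Matrix.mulVec_zero]
  constructor
  · intro hInv
    refine ⟨D * A * Dᵀ, ?_, ?_⟩
    · have := hA.mul_mul_conjTranspose_same D
      simpa [Matrix.conjTranspose_eq_transpose_of_trivial, Matrix.mul_assoc] using this
    · apply eq_of_mulVec_eq'
      intro x
      have hy : D *ᵥ (x - Dᵀ *ᵥ (D *ᵥ x)) = 0 := by
        simp only [Matrix.mulVec_sub, Matrix.mulVec_mulVec]
        rw [← Matrix.mul_assoc, hDDT, Matrix.one_mul]
        simp
      have hCy := (hkerDC _).mp hy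
      have hCAy := hInv _ hCy
      have hDAy := (hkerDC _).mpr hCAy
      have expand : D *ᵥ (A *ᵥ (x - Dᵀ *ᵥ (D *ᵥ x))) =
          (D * A) *ᵥ x - (D * A * Dᵀ * D) *ᵥ x := by
        simp [Matrix.mulVec_sub, Matrix.mulVec_mulVec, Matrix.mul_assoc]
      rw [expand] at hDAy
      have := sub_eq_zero.mp hDAy
      calc (S⁻¹ * C * A) *ᵥ x = (D * A) *ᵥ x := by rw [hDdef]
        _ = (D * A * Dᵀ * D) *ᵥ x := this
        _ = (D * A * Dᵀ * (S⁻¹ * C)) *ᵥ x := by rw [← hDdef]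
  · rintro ⟨Abar, _, hAbar⟩
    intro x hx
    have hDx : D *ᵥ x = 0 := (hkerDC x).mpr hx
    have : (S⁻¹ * C * A) *ᵥ x = Abar *ᵥ (D *ᵥ x) := by
      rw [hAbar, ← Matrix.mulVec_mulVec, hDdef]
    rw [hDx, Matrix.mulVec_zero] at this
    have hDA : D *ᵥ (A *ᵥ x) = 0 := by
      rw [Matrix.mulVec_mulVec, hDdef]; exact this
    exact (hkerDC _).mp hDA
end

section
/- Let C_p be the (N-p)×N full row-rank synchronization matrix and D a symmetric positive semi-definite N×N real matrix. Then Ker(C_p) ⊆ Ker(D) if and only if there exists a symmetric positive semi-definite (N-p)×(N-p) matrix R such that D = C_pᵀ R C_p. -/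
open Matrix

theorem stmt3 (N p : ℕ)
    (C : Matrix (Fin (N - p)) (Fin N) ℝ) (hC : C.rank = N - p)
    (D : Matrix (Fin N) (Fin N) ℝ) (hD : D.PosSemidef) :
    (∀ x : Fin N → ℝ, C.mulVec x = 0 → D.mulVec x = 0) ↔
      ∃ R : Matrix (Fin (N - p)) (Fin (N - p)) ℝ, R.PosSemidef ∧ D = Cᵀ * R * C := by
  constructor
  · intro hker
    set G : Matrix (Fin (N - p)) (Fin (N - p)) ℝ := C * Cᵀ with hGdef
    -- Cᵀ has trivial kernel
    have hkerC : ∀ y : Fin (N - p) → ℝ, Cᵀ.mulVec y = 0 → y = 0 := by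
      intro y hy
      have hrn := LinearMap.finrank_range_add_finrank_ker (Cᵀ).mulVecLin
      have hrank : (Cᵀ).rank = N - p := by rw [Matrix.rank_transpose]; exact hC
      have hdom : Module.finrank ℝ (Fin (N - p) → ℝ) = N - p := by simp
      rw [hdom] at hrn
      have hk0 : Module.finrank ℝ (LinearMap.ker (Cᵀ).mulVecLin) = 0 := by
        have : Cᵀ.rank + Module.finrank ℝ (LinearMap.ker (Cᵀ).mulVecLin) = N - p := hrn
        omega
      have hbot : LinearMap.ker (Cᵀ).mulVecLin = ⊥ := Submodule.finrank_eq_zero.mp hk0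
      have hy' : y ∈ LinearMap.ker (Cᵀ).mulVecLin := by
        exact LinearMap.mem_ker.mpr hy
      rw [hbot] at hy'
      simpa using hy'
    -- G is invertible
    have hGunit : IsUnit G := by
      rw [← Matrix.mulVec_injective_iff_isUnit]
      intro x y h
      have hz : G.mulVec (x - y) = 0 := by
        rw [Matrix.mulVec_sub, h, sub_self]
      have h1 : Cᵀ.mulVec (x - y) ⬝ᵥ Cᵀ.mulVec (x - y) = 0 := by
        have h2 : (x - y) ⬝ᵥ G.mulVec (x - y) = 0 := by rw [hz, dotProduct_zero]
        rw [hGdef, ← Matrix.mulVec_mulVec, dotProduct_mulVec, ← Matrix.mulVec_transpose] at h2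
        exact h2
      have h3 : Cᵀ.mulVec (x - y) = 0 := dotProduct_self_eq_zero.mp h1
      have := hkerC _ h3
      exact sub_eq_zero.mp this
    have hdet : IsUnit G.det := (Matrix.isUnit_iff_isUnit_det G).mp hGunit
    have hGinv : G * G⁻¹ = 1 := Matrix.mul_nonsing_inv G hdet
    have hGinv' : G⁻¹ * G = 1 := Matrix.nonsing_inv_mul G hdet
    -- G and G⁻¹ are symmetric
    have hGsymm : Gᵀ = G := by rw [hGdef, Matrix.transpose_mul, Matrix.transpose_transpose]
    have hGinvsymm : (G⁻¹)ᵀ = G⁻¹ := by rw [Matrix.transpose_nonsing_inv, hGsymm]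
    set P : Matrix (Fin N) (Fin N) ℝ := Cᵀ * G⁻¹ * C with hPdef
    have hCP : C * P = C := by
      rw [hPdef, ← Matrix.mul_assoc, ← Matrix.mul_assoc, ← hGdef, hGinv, Matrix.one_mul]
    -- D * P = D
    have hDP : D * P = D := by
      have hmv : ∀ v : Fin N → ℝ, (D * P).mulVec v = D.mulVec v := by
        intro v
        have h1 : C.mulVec (v - P.mulVec v) = 0 := by
          rw [Matrix.mulVec_sub, Matrix.mulVec_mulVec, hCP, sub_self]
        have h2 := hker _ h1
        rw [Matrix.mulVec_sub, sub_eq_zero] at h2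
        rw [← Matrix.mulVec_mulVec]
        exact h2.symm
      ext i j
      have := congrFun (hmv (Pi.single j 1)) i
      simpa [Matrix.mulVec_single_one] using this
    have hPsymm : Pᵀ = P := by
      rw [hPdef, Matrix.transpose_mul, Matrix.transpose_mul, Matrix.transpose_transpose,
        hGinvsymm, Matrix.mul_assoc]
    have hDsymm : Dᵀ = D := by
      have := hD.isHermitian
      rwa [Matrix.IsHermitian, Matrix.conjTranspose_eq_transpose_of_trivial] at this
    have hPD : P * D = D := by
      calc P * D = (Dᵀ * Pᵀ)ᵀ := by rw [Matrix.transpose_mul, Matrix.transpose_transpose,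
            Matrix.transpose_transpose]
        _ = (D * P)ᵀ := by rw [hDsymm, hPsymm]
        _ = Dᵀ := by rw [hDP]
        _ = D := hDsymm
    refine ⟨(G⁻¹ * C) * D * (G⁻¹ * C)ᴴ, hD.mul_mul_conjTranspose_same _, ?_⟩
    have hBH : (G⁻¹ * C)ᴴ = Cᵀ * G⁻¹ := by
      rw [Matrix.conjTranspose_eq_transpose_of_trivial, Matrix.transpose_mul, hGinvsymm]
    rw [hBH]
    calc D = P * D * P := by rw [hPD, hDP]
      _ = Cᵀ * (G⁻¹ * C * D * (Cᵀ * G⁻¹)) * C := by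
          rw [hPdef]; simp only [Matrix.mul_assoc]
  · rintro ⟨R, hR, rfl⟩ x hx
    rw [Matrix.mul_assoc, ← Matrix.mulVec_mulVec, ← Matrix.mulVec_mulVec, hx,
      Matrix.mulVec_zero, Matrix.mulVec_zero]
end
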